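/- Suppose L is a free A-module with a finite basis (Z_α)_{α∈ι}, and let ρ : L →ₗ[A] L be A-linear. Define the Weitzenböck operator ∇_X Y := ∑_α (ρ(X) Y^α) • Z_α, where Y = ∑_α Y^α • Z_α is the basis expansion of Y. Then (∇, ρ) is a quasi-connection on L: ∇ is ℝ-bilinear and for all f ∈ A, X, Y ∈ L, ∇_{f•X} Y = f • ∇_X Y and ∇_X (f•Y) = (ρ(X) f) • Y + f • ∇_X Y. -/

import Mathlib

open scoped BigOperators

/-- A (parity-sign-free) quasi-connection on the module `L = Derivation ℝ A A` of
vector fields: an `A`-linear anchor `ρ` together with an `ℝ`-bilinear map `∇`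
satisfying `∇_{f•X} Y = f • ∇_X Y` and `∇_X (f•Y) = (ρ(X) f) • Y + f • ∇_X Y`. -/
def IsQuasiConnection {A : Type*} [CommRing A] [Algebra ℝ A]
    (nabla : Derivation ℝ A A → Derivation ℝ A A → Derivation ℝ A A)
    (rho : Derivation ℝ A A →ₗ[A] Derivation ℝ A A) : Prop :=
  (∀ X X' Y, nabla (X + X') Y = nabla X Y + nabla X' Y) ∧
  (∀ (c : ℝ) (X Y), nabla (c • X) Y = c • nabla X Y) ∧
  (∀ X Y Y', nabla X (Y + Y') = nabla X Y + nabla X Y') ∧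
  (∀ (c : ℝ) (X Y), nabla X (c • Y) = c • nabla X Y) ∧
  (∀ (f : A) (X Y), nabla (f • X) Y = f • nabla X Y) ∧
  (∀ (f : A) (X Y), nabla X (f • Y) = rho X f • Y + f • nabla X Y)

/-- The torsion `T(X,Y) := ∇_X Y − ∇_Y X − ρ(⁅ρ(X), ρ(Y)⁆)` of a quasi-connection. -/
def qcTorsion {A : Type*} [CommRing A] [Algebra ℝ A]
    (nabla : Derivation ℝ A A → Derivation ℝ A A → Derivation ℝ A A)
    (rho : Derivation ℝ A A →ₗ[A] Derivation ℝ A A)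
    (X Y : Derivation ℝ A A) : Derivation ℝ A A :=
  nabla X Y - nabla Y X - rho ⁅rho X, rho Y⁆

/-- The curvature `R(X,Y)Z := ∇_X(∇_Y Z) − ∇_Y(∇_X Z) − ∇_{ρ(⁅ρ(X), ρ(Y)⁆)} Z`. -/
def qcCurvature {A : Type*} [CommRing A] [Algebra ℝ A]
    (nabla : Derivation ℝ A A → Derivation ℝ A A → Derivation ℝ A A)
    (rho : Derivation ℝ A A →ₗ[A] Derivation ℝ A A)
    (X Y Z : Derivation ℝ A A) : Derivation ℝ A A :=
  nabla X (nabla Y Z) - nabla Y (nabla X Z) - nabla (rho ⁅rho X, rho Y⁆) Z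

/-- An affine connection on `L = Derivation ℝ A A`. -/
def IsAffineConnection {A : Type*} [CommRing A] [Algebra ℝ A]
    (nabla : Derivation ℝ A A → Derivation ℝ A A → Derivation ℝ A A) : Prop :=
  (∀ X X' Y, nabla (X + X') Y = nabla X Y + nabla X' Y) ∧
  (∀ (c : ℝ) (X Y), nabla (c • X) Y = c • nabla X Y) ∧
  (∀ X Y Y', nabla X (Y + Y') = nabla X Y + nabla X Y') ∧
  (∀ (c : ℝ) (X Y), nabla X (c • Y) = c • nabla X Y) ∧
  (∀ (f : A) (X Y), nabla (f • X) Y = f • nabla X Y) ∧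
  (∀ (f : A) (X Y), nabla X (f • Y) = X f • Y + f • nabla X Y)

/-- Definition 2.39 together with Propositions 2.42/Theorem 2.33 (sign-free form):
the Weitzenböck operator `∇_X Y := ∑ α, (ρ(X) Y^α) • Z_α` associated to a finite
basis (parallelisation) `(Z_α)` and an `A`-linear `ρ` is a quasi-connection. -/
theorem weitzenboeck_isQuasiConnection {A : Type*} [CommRing A] [Algebra ℝ A]
    {ι : Type*} [Fintype ι]
    (b : Module.Basis ι A (Derivation ℝ A A))
    (rho : Derivation ℝ A A →ₗ[A] Derivation ℝ A A) :
    IsQuasiConnection (fun X Y => ∑ α, rho X (b.repr Y α) • b α) rho := by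
  refine ⟨?_, ?_, ?_, ?_, ?_, ?_⟩
  · intro X X' Y
    rw [← Finset.sum_add_distrib]
    refine Finset.sum_congr rfl fun α _ => ?_
    rw [map_add]
    simp [add_smul]
  · intro c X Y
    rw [Finset.smul_sum]
    refine Finset.sum_congr rfl fun α _ => ?_
    rw [← algebraMap_smul A c X, map_smul, algebraMap_smul]
    simp [smul_assoc]
  · intro X Y Y'
    rw [← Finset.sum_add_distrib]
    refine Finset.sum_congr rfl fun α _ => ?_
    rw [map_add, Finsupp.add_apply, map_add, add_smul]
  · intro c X Y
    rw [Finset.smul_sum]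
    refine Finset.sum_congr rfl fun α _ => ?_
    rw [← algebraMap_smul A c Y, map_smul, Finsupp.smul_apply, algebraMap_smul,
      Derivation.map_smul, smul_assoc]
  · intro f X Y
    rw [Finset.smul_sum]
    refine Finset.sum_congr rfl fun α _ => ?_
    rw [map_smul]
    simp [smul_smul]
  · intro f X Y
    have h : ∀ α, (b.repr (f • Y)) α = f * b.repr Y α := by
      intro α; rw [map_smul, Finsupp.smul_apply, smul_eq_mul]
    calc (∑ α, rho X ((b.repr (f • Y)) α) • b α)
        = ∑ α, (rho X f * b.repr Y α + f * rho X (b.repr Y α)) • b α := by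
          refine Finset.sum_congr rfl fun α _ => ?_
          rw [h α, Derivation.leibniz, smul_eq_mul, smul_eq_mul]
          congr 1
          ring
      _ = rho X f • Y + f • ∑ α, rho X (b.repr Y α) • b α := by
          simp only [add_smul, mul_smul]
          rw [Finset.sum_add_distrib, ← Finset.smul_sum, ← Finset.smul_sum,
            b.sum_repr Y]
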